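/- For constant pairwise commuting M_α and constant N_α, the inclusion Im 𝒞(t₀, t) ⊆ Im G, equivalently Ker(Gᵀ) ⊆ Ker(𝒞(t₀, t)ᵀ), holds for all t₀, t ∈ ℝᵐ (without any ordering assumption on t₀, t); hence rank 𝒞(t₀, t) ≤ rank G for all t₀, t. -/

import Mathlib

open Matrix MeasureTheory

noncomputable section

/-- The segment from `t₀` to `t`, parametrized on `[0,1]`. -/
def seg {m : ℕ} (t₀ t : Fin m → ℝ) (τ : ℝ) : Fin m → ℝ := t₀ + τ • (t - t₀)

/-- `e^{−M_β(s^β − t₀^β)}`, the fundamental matrix factor of the autonomous system. -/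
def expNeg {m n : ℕ} (M : Fin m → Matrix (Fin n) (Fin n) ℝ) (t₀ s : Fin m → ℝ) :
    Matrix (Fin n) (Fin n) ℝ :=
  NormedSpace.exp (-(∑ β, (s β - t₀ β) • M β))

/-- The controllability gramian
`𝒞(t₀,t) = ∫_{γ_{t₀,t}} e^{−M_β(s^β−t₀^β)} N_α N_αᵀ (e^{−M_β(s^β−t₀^β)})ᵀ ds^α` of the
autonomous system, computed along the segment from `t₀` to `t`. -/
def ctrlGramianConst {m n k : ℕ} (M : Fin m → Matrix (Fin n) (Fin n) ℝ)
    (N : Fin m → Matrix (Fin n) (Fin k) ℝ) (t₀ t : Fin m → ℝ) :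
    Matrix (Fin n) (Fin n) ℝ :=
  fun i j => ∫ τ in (0:ℝ)..1, ∑ α, (t α - t₀ α) *
    (expNeg M t₀ (seg t₀ t τ) * (N α * (N α)ᵀ) * (expNeg M t₀ (seg t₀ t τ))ᵀ) i j

/-- The image of the controllability matrix `G`: the span of the columns of all the
blocks `M₁^{k₁} M₂^{k₂} ⋯ M_m^{k_m} N_α` with `0 ≤ k₁, …, k_m ≤ n−1`. -/
def imageCtrlMatrix {m n k : ℕ} (M : Fin m → Matrix (Fin n) (Fin n) ℝ)
    (N : Fin m → Matrix (Fin n) (Fin k) ℝ) : Submodule ℝ (Fin n → ℝ) :=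
  Submodule.span ℝ { w | ∃ κ : Fin m → ℕ, (∀ i, κ i ≤ n - 1) ∧
    ∃ (α : Fin m) (j : Fin k),
      w = (List.ofFn fun i => M i ^ κ i).prod *ᵥ (fun r => N α r j) }

namespace GramianImageAux

open Polynomial

variable {m n k : ℕ}

/-- "Apply to a fixed vector" as a linear map on matrices. -/
def appVec {n : ℕ} (w : Fin n → ℝ) : Matrix (Fin n) (Fin n) ℝ →ₗ[ℝ] (Fin n → ℝ) where
  toFun A := A *ᵥ w
  map_add' A B := Matrix.add_mulVec A B w
  map_smul' c A := Matrix.smul_mulVec c A w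

@[simp] theorem appVec_apply {n : ℕ} (w : Fin n → ℝ) (A : Matrix (Fin n) (Fin n) ℝ) :
    appVec w A = A *ᵥ w := rfl

/-- Cayley–Hamilton: the `n`-th power of an `n×n` matrix is a linear combination of
lower powers. -/
theorem cayley {n : ℕ} (hn : 0 < n) (A : Matrix (Fin n) (Fin n) ℝ) :
    A ^ n = ∑ p ∈ Finset.range n, (((X : ℝ[X]) ^ n %ₘ A.charpoly).coeff p) • A ^ p := by
  have h2 : ((X : ℝ[X]) ^ n %ₘ A.charpoly).natDegree < n := by
    by_cases h : (X : ℝ[X]) ^ n %ₘ A.charpoly = 0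
    · simpa [h] using hn
    · have := Polynomial.degree_modByMonic_lt ((X : ℝ[X]) ^ n) (A.charpoly_monic)
      rw [Matrix.charpoly_degree_eq_dim] at this
      exact (Polynomial.natDegree_lt_iff_degree_lt h).2 (by simpa using this)
  rw [show A ^ n = (aeval A) ((X:ℝ[X]) ^ n %ₘ A.charpoly) from
    Matrix.pow_eq_aeval_mod_charpoly A n]
  exact Polynomial.aeval_eq_sum_range' h2 A

/-- The image of the controllability matrix is stable under each `M i`. -/
theorem mulVec_stable (M : Fin m → Matrix (Fin n) (Fin n) ℝ)
    (hM : ∀ α β, M α * M β = M β * M α)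
    (N : Fin m → Matrix (Fin n) (Fin k) ℝ) (i : Fin m) :
    ∀ w ∈ imageCtrlMatrix M N, M i *ᵥ w ∈ imageCtrlMatrix M N := by
  have hcomm : ∀ a ∈ Set.range M, ∀ b ∈ Set.range M, a * b = b * a := by
    rintro _ ⟨a, rfl⟩ _ ⟨b, rfl⟩; exact hM a b
  letI := Submonoid.closureCommMonoidOfComm (hcomm := hcomm)
  set M' : Fin m → Submonoid.closure (Set.range M) :=
    fun i => ⟨M i, Submonoid.subset_closure ⟨i, rfl⟩⟩ with hM'
  have hcoe : ∀ κ : Fin m → ℕ,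
      ((↑(∏ r, M' r ^ κ r) : Matrix (Fin n) (Fin n) ℝ))
        = (List.ofFn fun r => M r ^ κ r).prod := by
    intro κ
    rw [← List.prod_ofFn]
    have h1 := MonoidHom.map_list_prod (Submonoid.closure (Set.range M)).subtype
      (List.ofFn fun r => M' r ^ κ r)
    simp only [Submonoid.coe_subtype] at h1
    rw [h1, List.map_ofFn]
    simp [Function.comp_def]
    rfl
  intro w hw
  induction hw using Submodule.span_induction with
  | zero => rw [Matrix.mulVec_zero]; exact zero_mem _
  | add x y _ _ hx hy => rw [Matrix.mulVec_add]; exact add_mem hx hy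
  | smul c x _ hx => rw [Matrix.mulVec_smul]; exact Submodule.smul_mem _ c hx
  | mem x hx =>
    obtain ⟨κ, hκ, α, j, rfl⟩ := hx
    rcases Nat.eq_zero_or_pos n with hn | hn
    · subst hn
      rw [Subsingleton.elim (M i *ᵥ _) (0 : Fin 0 → ℝ)]
      exact zero_mem _
    rw [Matrix.mulVec_mulVec, ← hcoe κ]
    have hsplit : (∏ r, M' r ^ κ r)
        = M' i ^ κ i * ∏ r ∈ Finset.univ.erase i, M' r ^ κ r :=
      (Finset.mul_prod_erase _ _ (Finset.mem_univ i)).symm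
    have hup : ∀ a : ℕ, (∏ r, M' r ^ Function.update κ i a r)
        = M' i ^ a * ∏ r ∈ Finset.univ.erase i, M' r ^ κ r := by
      intro a
      have h4 : (fun r => M' r ^ Function.update κ i a r)
          = Function.update (fun r => M' r ^ κ r) i (M' i ^ a) := by
        funext r
        rcases eq_or_ne r i with h | h
        · subst h; simp
        · simp [Function.update_of_ne h]
      rw [h4, Finset.prod_update_of_mem (Finset.mem_univ i), Finset.erase_eq]
    have hupM : ∀ a : ℕ, ((↑(∏ r, M' r ^ Function.update κ i a r) : Matrix (Fin n) (Fin n) ℝ))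
        = M i ^ a * (↑(∏ r ∈ Finset.univ.erase i, M' r ^ κ r) : Matrix (Fin n) (Fin n) ℝ) := by
      intro a
      rw [hup a]; rfl
    have hT : M' i * (∏ r, M' r ^ κ r) = ∏ r, M' r ^ Function.update κ i (κ i + 1) r := by
      rw [hup (κ i + 1), pow_succ', mul_assoc, ← hsplit]
    have hkey : M i * (↑(∏ r, M' r ^ κ r) : Matrix (Fin n) (Fin n) ℝ)
        = ((↑(∏ r, M' r ^ Function.update κ i (κ i + 1) r) : Matrix (Fin n) (Fin n) ℝ)) := by
      rw [← hT]; rfl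
    by_cases hb : κ i + 1 ≤ n - 1
    · refine Submodule.subset_span ⟨Function.update κ i (κ i + 1), ?_, α, j, ?_⟩
      · intro r
        rcases eq_or_ne r i with h | h
        · subst h; simpa using hb
        · simpa [Function.update_of_ne h] using hκ r
      · rw [hkey, hcoe]
    · have hκi : κ i + 1 = n := by have := hκ i; omega
      set c : ℕ → ℝ := fun p => ((X : ℝ[X]) ^ n %ₘ (M i).charpoly).coeff p with hc
      have hsum : M i * (↑(∏ r, M' r ^ κ r) : Matrix (Fin n) (Fin n) ℝ)
          = ∑ p ∈ Finset.range n,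
              c p • ((↑(∏ r, M' r ^ Function.update κ i p r) : Matrix (Fin n) (Fin n) ℝ)) := by
        rw [hkey, hκi, hupM n, cayley hn (M i), Finset.sum_mul]
        refine Finset.sum_congr rfl fun p _ => ?_
        rw [smul_mul_assoc, hupM p]
      rw [hsum]
      have hdist : (∑ p ∈ Finset.range n,
            c p • ((↑(∏ r, M' r ^ Function.update κ i p r) : Matrix (Fin n) (Fin n) ℝ))) *ᵥ
            (fun r => N α r j)
          = ∑ p ∈ Finset.range n, c p •
              (((↑(∏ r, M' r ^ Function.update κ i p r) : Matrix (Fin n) (Fin n) ℝ)) *ᵥ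
                (fun r => N α r j)) := by
        have h5 := map_sum (appVec (fun r => N α r j))
          (fun p => c p • ((↑(∏ r, M' r ^ Function.update κ i p r) :
            Matrix (Fin n) (Fin n) ℝ))) (Finset.range n)
        simp only [LinearMap.map_smul, appVec_apply] at h5
        exact h5
      rw [hdist]
      refine sum_mem fun p hp => Submodule.smul_mem _ _ (Submodule.subset_span
        ⟨Function.update κ i p, ?_, α, j, by rw [hcoe]⟩)
      intro r
      rcases eq_or_ne r i with h | h
      · subst h; simp
        have := Finset.mem_range.mp hp; omega
      · simpa [Function.update_of_ne h] using hκ r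

/-- The image of the controllability matrix is stable under the exponential of any
linear combination of the `M β`. -/
theorem exp_stable (M : Fin m → Matrix (Fin n) (Fin n) ℝ)
    (hM : ∀ α β, M α * M β = M β * M α)
    (N : Fin m → Matrix (Fin n) (Fin k) ℝ) (c : Fin m → ℝ) :
    ∀ w ∈ imageCtrlMatrix M N,
      (NormedSpace.exp (-(∑ β, c β • M β))) *ᵥ w ∈ imageCtrlMatrix M N := by
  intro w hw
  have hstep : ∀ u ∈ imageCtrlMatrix M N,
      (-(∑ β, c β • M β)) *ᵥ u ∈ imageCtrlMatrix M N := by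
    intro u hu
    rw [Matrix.neg_mulVec]
    refine neg_mem ?_
    have h1 := map_sum (appVec u) (fun β => c β • M β) Finset.univ
    simp only [LinearMap.map_smul, appVec_apply] at h1
    rw [h1]
    exact sum_mem fun β _ => Submodule.smul_mem _ _ (mulVec_stable M hM N β u hu)
  have hpow : ∀ p : ℕ, ((-(∑ β, c β • M β)) ^ p) *ᵥ w ∈ imageCtrlMatrix M N := by
    intro p; induction p with
    | zero => simpa [Matrix.one_mulVec] using hw
    | succ p ih =>
      rw [pow_succ', ← Matrix.mulVec_mulVec]
      exact hstep _ ih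
  letI : SeminormedRing (Matrix (Fin n) (Fin n) ℝ) := Matrix.linftyOpSemiNormedRing
  letI : NormedRing (Matrix (Fin n) (Fin n) ℝ) := Matrix.linftyOpNormedRing
  letI : NormedAlgebra ℝ (Matrix (Fin n) (Fin n) ℝ) := Matrix.linftyOpNormedAlgebra
  set B := -(∑ β, c β • M β) with hB
  have hsum : Summable (fun p : ℕ => ((p.factorial : ℝ)⁻¹) • B ^ p) :=
    NormedSpace.expSeries_summable' B
  have h3 := (LinearMap.toContinuousLinearMap (appVec w)).hasSum hsum.hasSum
  rw [NormedSpace.exp_eq_tsum ℝ]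
  show (∑' p : ℕ, ((p.factorial : ℝ)⁻¹) • B ^ p) *ᵥ w ∈ imageCtrlMatrix M N
  exact (Submodule.closed_of_finiteDimensional _).mem_of_tendsto h3
    (Filter.Eventually.of_forall fun s => sum_mem fun p _ => by
      simp only [LinearMap.coe_toContinuousLinearMap', appVec_apply]
      rw [Matrix.smul_mulVec]
      exact Submodule.smul_mem _ _ (hpow p))

theorem col_mem (M : Fin m → Matrix (Fin n) (Fin n) ℝ)
    (N : Fin m → Matrix (Fin n) (Fin k) ℝ) (α : Fin m) (u : Fin k → ℝ) :
    N α *ᵥ u ∈ imageCtrlMatrix M N := by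
  have h : N α *ᵥ u = ∑ j, u j • (fun r => N α r j) := by
    funext r
    simp [Matrix.mulVec, dotProduct, Finset.sum_apply, mul_comm]
  rw [h]
  refine sum_mem fun j _ => Submodule.smul_mem _ _ (Submodule.subset_span
    ⟨0, by simp, α, j, ?_⟩)
  simp [Matrix.one_mulVec]

theorem term_mem (M : Fin m → Matrix (Fin n) (Fin n) ℝ)
    (hM : ∀ α β, M α * M β = M β * M α)
    (N : Fin m → Matrix (Fin n) (Fin k) ℝ) (t₀ s : Fin m → ℝ) (α : Fin m) (v : Fin n → ℝ) :
    (expNeg M t₀ s * (N α * (N α)ᵀ) * (expNeg M t₀ s)ᵀ) *ᵥ v ∈ imageCtrlMatrix M N := by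
  rw [← Matrix.mulVec_mulVec, ← Matrix.mulVec_mulVec, ← Matrix.mulVec_mulVec]
  exact exp_stable M hM N (fun β => s β - t₀ β) _ (col_mem M N α _)

end GramianImageAux

open GramianImageAux in
/-- For pairwise commuting constant `M_α` and constant `N_α`, the inclusion
`Im 𝒞(t₀,t) ⊆ Im G` holds for all `t₀, t` (no ordering assumption); in particular
`rank 𝒞(t₀,t) ≤ rank G`. -/
theorem gramian_image_subset_ctrlMatrix_image {m n k : ℕ}
    (M : Fin m → Matrix (Fin n) (Fin n) ℝ)
    (hM : ∀ α β, M α * M β = M β * M α)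
    (N : Fin m → Matrix (Fin n) (Fin k) ℝ) :
    ∀ t₀ t : Fin m → ℝ,
      LinearMap.range (ctrlGramianConst M N t₀ t).mulVecLin ≤ imageCtrlMatrix M N ∧
      (ctrlGramianConst M N t₀ t).rank ≤ Module.finrank ℝ (imageCtrlMatrix M N) := by
  intro t₀ t
  have hmain : LinearMap.range (ctrlGramianConst M N t₀ t).mulVecLin ≤ imageCtrlMatrix M N := by
    rintro _ ⟨v, rfl⟩
    rw [Matrix.mulVecLin_apply]
    -- the matrix-valued integrand along the segment
    set A : Fin m → ℝ → Matrix (Fin n) (Fin n) ℝ := fun α τ =>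
      expNeg M t₀ (seg t₀ t τ) * (N α * (N α)ᵀ) * (expNeg M t₀ (seg t₀ t τ))ᵀ with hA
    -- the vector-valued integrand
    set g : ℝ → (Fin n → ℝ) := fun τ => ∑ α, (t α - t₀ α) • (A α τ *ᵥ v) with hg
    -- continuity
    have hBc : Continuous fun τ : ℝ => -(∑ β, (seg t₀ t τ β - t₀ β) • M β) := by
      refine Continuous.neg (continuous_finset_sum _ fun β _ => Continuous.fun_smul ?_
        continuous_const)
      simp only [seg, Pi.add_apply, Pi.smul_apply, Pi.sub_apply, smul_eq_mul]
      fun_prop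
    have hE : Continuous fun τ => expNeg M t₀ (seg t₀ t τ) := by
      letI : SeminormedRing (Matrix (Fin n) (Fin n) ℝ) := Matrix.linftyOpSemiNormedRing
      letI : NormedRing (Matrix (Fin n) (Fin n) ℝ) := Matrix.linftyOpNormedRing
      letI : NormedAlgebra ℝ (Matrix (Fin n) (Fin n) ℝ) := Matrix.linftyOpNormedAlgebra
      exact (continuousOn_univ.1 (by
        rw [← Metric.eball_top_eq_univ (0 : Matrix (Fin n) (Fin n) ℝ),
          ← NormedSpace.expSeries_radius_eq_top ℝ (Matrix (Fin n) (Fin n) ℝ)]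
        exact NormedSpace.continuousOn_exp)).comp hBc
    have hAc : ∀ α, Continuous (A α) := fun α =>
      (hE.matrix_mul continuous_const).matrix_mul hE.matrix_transpose
    have hgc : Continuous g :=
      continuous_finset_sum _ fun α _ =>
        continuous_const.fun_smul ((hAc α).matrix_mulVec continuous_const)
    -- integral membership
    haveI : IsProbabilityMeasure (volume.restrict (Set.Ioc (0:ℝ) 1)) := by
      constructor
      simp [Real.volume_Ioc]
    have hint : IntegrableOn g (Set.Ioc (0:ℝ) 1) volume := hgc.integrableOn_Ioc
    have hVmem : (∫ τ in Set.Ioc (0:ℝ) 1, g τ) ∈ imageCtrlMatrix M N := by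
      refine (imageCtrlMatrix M N).convex.integral_mem
        ((imageCtrlMatrix M N).closed_of_finiteDimensional)
        (Filter.Eventually.of_forall fun τ => ?_) hint
      exact sum_mem fun α _ => Submodule.smul_mem _ _ (term_mem M hM N t₀ _ α v)
    -- identify the gramian applied to `v` with the vector-valued integral
    have hEq : (ctrlGramianConst M N t₀ t) *ᵥ v = ∫ τ in Set.Ioc (0:ℝ) 1, g τ := by
      funext i
      have hFc : ∀ j, Continuous fun τ => (∑ α, (t α - t₀ α) * (A α τ) i j) :=
        fun j => continuous_finset_sum _ fun α _ =>
          continuous_const.mul ((hAc α).matrix_elem i j)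
      have h1 : ∀ j, ctrlGramianConst M N t₀ t i j
          = ∫ τ in (0:ℝ)..1, (∑ α, (t α - t₀ α) * (A α τ) i j) := by
        intro j
        rw [hA]
        rfl
      have hswap : ∀ τ : ℝ, (∑ j, (∑ α, (t α - t₀ α) * (A α τ) i j) * v j) = g τ i := by
        intro τ
        simp only [hg, Finset.sum_apply, Pi.smul_apply, smul_eq_mul, Matrix.mulVec,
          dotProduct, Finset.mul_sum, Finset.sum_mul, mul_assoc]
        exact Finset.sum_comm
      calc (ctrlGramianConst M N t₀ t *ᵥ v) i
          = ∑ j, (∫ τ in (0:ℝ)..1, (∑ α, (t α - t₀ α) * (A α τ) i j)) * v j := by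
            simp only [Matrix.mulVec, dotProduct]
            exact Finset.sum_congr rfl fun j _ => by rw [h1 j]
        _ = ∑ j, ∫ τ in (0:ℝ)..1, (∑ α, (t α - t₀ α) * (A α τ) i j) * v j := by
            refine Finset.sum_congr rfl fun j _ => ?_
            rw [← intervalIntegral.integral_mul_const]
        _ = ∫ τ in (0:ℝ)..1, ∑ j, (∑ α, (t α - t₀ α) * (A α τ) i j) * v j := by
            rw [← intervalIntegral.integral_finset_sum
              (fun j _ => ((hFc j).fun_mul continuous_const).intervalIntegrable _ _)]
        _ = ∫ τ in (0:ℝ)..1, g τ i :=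
            intervalIntegral.integral_congr fun τ _ => hswap τ
        _ = ∫ τ in Set.Ioc (0:ℝ) 1, g τ i := intervalIntegral.integral_of_le zero_le_one
        _ = (∫ τ in Set.Ioc (0:ℝ) 1, g τ) i := by
            have hproj := (ContinuousLinearMap.proj (R := ℝ)
              (φ := fun _ : Fin n => ℝ) i).integral_comp_comm hint
            simpa using hproj
    rw [hEq]
    exact hVmem
  refine ⟨hmain, ?_⟩
  exact Submodule.finrank_mono hmain
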